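/- arXiv:math/0402021 — 7 statements merged into one kernel-verified Lean document; each statement's English description precedes it below -/
import Mathlib

section
/- Let G₆,₃ be the 6-dimensional real Lie algebra with basis x₁,…,x₆ and nonzero brackets [x₁,x₂]=x₄, [x₁,x₃]=x₅, [x₂,x₃]=x₆. Define J₀ : G₆,₃ → G₆,₃ by J₀x₁ = x₂, J₀x₂ = −x₁, J₀x₃ = x₄, J₀x₄ = −x₃, J₀x₅ = x₆, J₀x₆ = −x₅. Then J₀² = −1 and J₀ satisfies the Nijenhuis integrability condition [J₀X,J₀Y] − [X,Y] − J₀[J₀X,Y] − J₀[X,J₀Y] = 0 for all X,Y. -/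
/-- On the Lie algebra `𝒢₆,₃` (brackets `[x₁,x₂]=x₄`, `[x₁,x₃]=x₅`, `[x₂,x₃]=x₆`),
the map `J₀` with `J₀x₁=x₂, J₀x₃=x₄, J₀x₅=x₆` (and `J₀²=-1`) is an integrable
almost complex structure. -/
theorem g63_J0_integrable
    (L : Type*) [LieRing L] [LieAlgebra ℝ L]
    (x : Module.Basis (Fin 6) ℝ L)
    (h01 : ⁅x 0, x 1⁆ = x 3) (h02 : ⁅x 0, x 2⁆ = x 4) (h12 : ⁅x 1, x 2⁆ = x 5)
    (h03 : ⁅x 0, x 3⁆ = 0) (h04 : ⁅x 0, x 4⁆ = 0) (h05 : ⁅x 0, x 5⁆ = 0)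
    (h13 : ⁅x 1, x 3⁆ = 0) (h14 : ⁅x 1, x 4⁆ = 0) (h15 : ⁅x 1, x 5⁆ = 0)
    (h23 : ⁅x 2, x 3⁆ = 0) (h24 : ⁅x 2, x 4⁆ = 0) (h25 : ⁅x 2, x 5⁆ = 0)
    (h34 : ⁅x 3, x 4⁆ = 0) (h35 : ⁅x 3, x 5⁆ = 0) (h45 : ⁅x 4, x 5⁆ = 0)
    (J : L →ₗ[ℝ] L)
    (hJ0 : J (x 0) = x 1) (hJ1 : J (x 1) = -x 0)
    (hJ2 : J (x 2) = x 3) (hJ3 : J (x 3) = -x 2)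
    (hJ4 : J (x 4) = x 5) (hJ5 : J (x 5) = -x 4) :
    (∀ X : L, J (J X) = -X) ∧
    (∀ X Y : L, ⁅J X, J Y⁆ - ⁅X, Y⁆ - J ⁅J X, Y⁆ - J ⁅X, J Y⁆ = 0) := by
  have h10 : ⁅x 1, x 0⁆ = -x 3 := by rw [← lie_skew, h01]
  have h20 : ⁅x 2, x 0⁆ = -x 4 := by rw [← lie_skew, h02]
  have h21 : ⁅x 2, x 1⁆ = -x 5 := by rw [← lie_skew, h12]
  have h30 : ⁅x 3, x 0⁆ = 0 := by rw [← lie_skew, h03, neg_zero]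
  have h40 : ⁅x 4, x 0⁆ = 0 := by rw [← lie_skew, h04, neg_zero]
  have h50 : ⁅x 5, x 0⁆ = 0 := by rw [← lie_skew, h05, neg_zero]
  have h31 : ⁅x 3, x 1⁆ = 0 := by rw [← lie_skew, h13, neg_zero]
  have h41 : ⁅x 4, x 1⁆ = 0 := by rw [← lie_skew, h14, neg_zero]
  have h51 : ⁅x 5, x 1⁆ = 0 := by rw [← lie_skew, h15, neg_zero]
  have h32 : ⁅x 3, x 2⁆ = 0 := by rw [← lie_skew, h23, neg_zero]
  have h42 : ⁅x 4, x 2⁆ = 0 := by rw [← lie_skew, h24, neg_zero]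
  have h52 : ⁅x 5, x 2⁆ = 0 := by rw [← lie_skew, h25, neg_zero]
  have h43 : ⁅x 4, x 3⁆ = 0 := by rw [← lie_skew, h34, neg_zero]
  have h53 : ⁅x 5, x 3⁆ = 0 := by rw [← lie_skew, h35, neg_zero]
  have h54 : ⁅x 5, x 4⁆ = 0 := by rw [← lie_skew, h45, neg_zero]
  constructor
  · have hJJ : (J ∘ₗ J) = -LinearMap.id := by
      apply x.ext
      intro i
      fin_cases i <;> simp [hJ0, hJ1, hJ2, hJ3, hJ4, hJ5]
    intro X
    simpa using LinearMap.ext_iff.mp hJJ X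
  · let N : L →ₗ[ℝ] L →ₗ[ℝ] L :=
      LinearMap.mk₂ ℝ (fun X Y => ⁅J X, J Y⁆ - ⁅X, Y⁆ - J ⁅J X, Y⁆ - J ⁅X, J Y⁆)
        (by intros; simp only [map_add, add_lie, lie_add]; abel)
        (by intros; simp only [map_smul, smul_lie, lie_smul, smul_sub])
        (by intros; simp only [map_add, add_lie, lie_add]; abel)
        (by intros; simp only [map_smul, smul_lie, lie_smul, smul_sub])
    have hN : N = 0 := by
      refine x.ext fun i => x.ext fun j => ?_
      fin_cases i <;> fin_cases j <;>
        simp [N, lie_self, hJ0, hJ1, hJ2, hJ3, hJ4, hJ5,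
          h01, h02, h12, h03, h04, h05, h13, h14, h15, h23, h24, h25, h34, h35, h45,
          h10, h20, h21, h30, h40, h50, h31, h41, h51, h32, h42, h52, h43, h53, h54]
    intro X Y
    have := LinearMap.ext_iff.mp (LinearMap.ext_iff.mp hN X) Y
    simpa [N] using this
end

section
/- Let G₆,₇ be the 6-dimensional real Lie algebra with basis x₁,…,x₆ and nonzero brackets [x₁,x₂]=x₄, [x₁,x₃]=x₅, [x₁,x₄]=x₆, [x₂,x₃]=−x₆. For a real number α with α ≠ 0 and α ≠ 1, define J_α by J_α x₁ = −x₂, J_α x₂ = x₁, J_α x₃ = −(1/α)x₄, J_α x₄ = α x₃, J_α x₅ = ((α−1)/α)x₆, J_α x₆ = −(α/(α−1))x₅. Then J_α² = −1 and J_α satisfies the Nijenhuis integrability condition for all X,Y ∈ G₆,₇. -/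
set_option maxHeartbeats 2000000


/-- On the Lie algebra `𝒢₆,₇` (`[x₁,x₂]=x₄, [x₁,x₃]=x₅, [x₁,x₄]=x₆, [x₂,x₃]=-x₆`),
for any real `α ≠ 0, 1` the map `J_α` is an integrable almost complex structure. -/
theorem g67_Jalpha_integrable
    (L : Type*) [LieRing L] [LieAlgebra ℝ L]
    (x : Module.Basis (Fin 6) ℝ L)
    (h01 : ⁅x 0, x 1⁆ = x 3) (h02 : ⁅x 0, x 2⁆ = x 4)
    (h03 : ⁅x 0, x 3⁆ = x 5) (h12 : ⁅x 1, x 2⁆ = -x 5)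
    (h04 : ⁅x 0, x 4⁆ = 0) (h05 : ⁅x 0, x 5⁆ = 0)
    (h13 : ⁅x 1, x 3⁆ = 0) (h14 : ⁅x 1, x 4⁆ = 0) (h15 : ⁅x 1, x 5⁆ = 0)
    (h23 : ⁅x 2, x 3⁆ = 0) (h24 : ⁅x 2, x 4⁆ = 0) (h25 : ⁅x 2, x 5⁆ = 0)
    (h34 : ⁅x 3, x 4⁆ = 0) (h35 : ⁅x 3, x 5⁆ = 0) (h45 : ⁅x 4, x 5⁆ = 0)
    (α : ℝ) (hα0 : α ≠ 0) (hα1 : α ≠ 1)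
    (J : L →ₗ[ℝ] L)
    (hJ0 : J (x 0) = -x 1) (hJ1 : J (x 1) = x 0)
    (hJ2 : J (x 2) = -(1 / α) • x 3) (hJ3 : J (x 3) = α • x 2)
    (hJ4 : J (x 4) = ((α - 1) / α) • x 5) (hJ5 : J (x 5) = -(α / (α - 1)) • x 4) :
    (∀ X : L, J (J X) = -X) ∧
    (∀ X Y : L, ⁅J X, J Y⁆ - ⁅X, Y⁆ - J ⁅J X, Y⁆ - J ⁅X, J Y⁆ = 0) := by
  have hs : α - 1 ≠ 0 := sub_ne_zero.mpr hα1
  have h10 : ⁅x 1, x 0⁆ = -x 3 := by rw [← lie_skew, h01]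
  have h20 : ⁅x 2, x 0⁆ = -x 4 := by rw [← lie_skew, h02]
  have h30 : ⁅x 3, x 0⁆ = -x 5 := by rw [← lie_skew, h03]
  have h21 : ⁅x 2, x 1⁆ = x 5 := by rw [← lie_skew, h12]; simp
  have h40 : ⁅x 4, x 0⁆ = 0 := by rw [← lie_skew, h04]; simp
  have h50 : ⁅x 5, x 0⁆ = 0 := by rw [← lie_skew, h05]; simp
  have h31 : ⁅x 3, x 1⁆ = 0 := by rw [← lie_skew, h13]; simp
  have h41 : ⁅x 4, x 1⁆ = 0 := by rw [← lie_skew, h14]; simp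
  have h51 : ⁅x 5, x 1⁆ = 0 := by rw [← lie_skew, h15]; simp
  have h32 : ⁅x 3, x 2⁆ = 0 := by rw [← lie_skew, h23]; simp
  have h42 : ⁅x 4, x 2⁆ = 0 := by rw [← lie_skew, h24]; simp
  have h52 : ⁅x 5, x 2⁆ = 0 := by rw [← lie_skew, h25]; simp
  have h43 : ⁅x 4, x 3⁆ = 0 := by rw [← lie_skew, h34]; simp
  have h53 : ⁅x 5, x 3⁆ = 0 := by rw [← lie_skew, h35]; simp
  have h54 : ⁅x 5, x 4⁆ = 0 := by rw [← lie_skew, h45]; simp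
  constructor
  · have h : J ∘ₗ J = -LinearMap.id := by
      apply x.ext
      intro i
      fin_cases i <;>
        simp [hJ0, hJ1, hJ2, hJ3, hJ4, hJ5, smul_smul] <;>
        match_scalars <;> field_simp
    intro X
    simpa using LinearMap.congr_fun h X
  · set B : L →ₗ[ℝ] L →ₗ[ℝ] L := LinearMap.mk₂ ℝ (fun X Y : L => ⁅X, Y⁆) add_lie smul_lie lie_add lie_smul with hB
    have hBapp : ∀ X Y : L, B X Y = ⁅X, Y⁆ := fun X Y => rfl
    have h : ((B ∘ₗ J).compl₂ J) - B - LinearMap.compr₂ (B ∘ₗ J) J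
        - LinearMap.compr₂ (B.compl₂ J) J = 0 := by
      apply x.ext
      intro i
      apply x.ext
      intro j
      fin_cases i <;> fin_cases j <;>
        simp only [LinearMap.sub_apply, LinearMap.compl₂_apply, LinearMap.compr₂_apply,
          LinearMap.comp_apply, LinearMap.zero_apply, hBapp] <;>
        simp [ hJ0, hJ1, hJ2, hJ3, hJ4, hJ5,
          h01, h02, h03, h12, h04, h05, h13, h14, h15, h23, h24, h25, h34, h35, h45,
          h10, h20, h30, h21, h40, h50, h31, h41, h51, h32, h42, h52, h43, h53, h54,
          smul_smul] <;>
        match_scalars <;> field_simp <;> ring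
    intro X Y
    have := LinearMap.congr_fun (LinearMap.congr_fun h X) Y
    simpa [hBapp, sub_eq_zero] using this
end

section
/- Let G₆,₄ be the 6-dimensional real Lie algebra with basis x₁,…,x₆ and nonzero brackets [x₁,x₂]=x₄, [x₁,x₃]=x₆, [x₂,x₄]=x₅. For real α, β with α + β ≠ 0, the linear map J_{α,β} defined in the basis by the block-diagonal matrix diag( [[α,1],[−(α²+1),−α]], [[(1−αβ)/(α+β), 1],[−(α²+1)(β²+1)/(α+β)², (αβ−1)/(α+β)]], [[β, (α²+1)(β²+1)/(α+β)],[−(α+β)/(α²+1), −β]] ) satisfies J_{α,β}² = −1 and the Nijenhuis integrability condition. -/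
set_option maxHeartbeats 1000000


/-- On the Lie algebra `𝒢₆,₄` (`[x₁,x₂]=x₄, [x₁,x₃]=x₆, [x₂,x₄]=x₅`), for real
`α, β` with `α + β ≠ 0`, the block-diagonal map `J_{α,β}` is an integrable
almost complex structure. -/
theorem g64_Jalphabeta_integrable
    (L : Type*) [LieRing L] [LieAlgebra ℝ L]
    (x : Module.Basis (Fin 6) ℝ L)
    (h01 : ⁅x 0, x 1⁆ = x 3) (h02 : ⁅x 0, x 2⁆ = x 5) (h13 : ⁅x 1, x 3⁆ = x 4)
    (h03 : ⁅x 0, x 3⁆ = 0) (h04 : ⁅x 0, x 4⁆ = 0) (h05 : ⁅x 0, x 5⁆ = 0)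
    (h12 : ⁅x 1, x 2⁆ = 0) (h14 : ⁅x 1, x 4⁆ = 0) (h15 : ⁅x 1, x 5⁆ = 0)
    (h23 : ⁅x 2, x 3⁆ = 0) (h24 : ⁅x 2, x 4⁆ = 0) (h25 : ⁅x 2, x 5⁆ = 0)
    (h34 : ⁅x 3, x 4⁆ = 0) (h35 : ⁅x 3, x 5⁆ = 0) (h45 : ⁅x 4, x 5⁆ = 0)
    (α β : ℝ) (hαβ : α + β ≠ 0)
    (J : L →ₗ[ℝ] L)
    (hJ0 : J (x 0) = α • x 0 + (-(α ^ 2 + 1)) • x 1)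
    (hJ1 : J (x 1) = x 0 + (-α) • x 1)
    (hJ2 : J (x 2) = ((1 - α * β) / (α + β)) • x 2
                    + (-((α ^ 2 + 1) * (β ^ 2 + 1) / (α + β) ^ 2)) • x 3)
    (hJ3 : J (x 3) = x 2 + ((α * β - 1) / (α + β)) • x 3)
    (hJ4 : J (x 4) = β • x 4 + (-((α + β) / (α ^ 2 + 1))) • x 5)
    (hJ5 : J (x 5) = ((α ^ 2 + 1) * (β ^ 2 + 1) / (α + β)) • x 4 + (-β) • x 5) :
    (∀ X : L, J (J X) = -X) ∧
    (∀ X Y : L, ⁅J X, J Y⁆ - ⁅X, Y⁆ - J ⁅J X, Y⁆ - J ⁅X, J Y⁆ = 0) := by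
  have ha : (α ^ 2 + 1) ≠ 0 := by positivity
  have hr10 : ⁅x 1, x 0⁆ = -x 3 := by rw [← lie_skew, h01]
  have hr20 : ⁅x 2, x 0⁆ = -x 5 := by rw [← lie_skew, h02]
  have hr31 : ⁅x 3, x 1⁆ = -x 4 := by rw [← lie_skew, h13]
  have hr30 : ⁅x 3, x 0⁆ = 0 := by rw [← lie_skew, h03, neg_zero]
  have hr40 : ⁅x 4, x 0⁆ = 0 := by rw [← lie_skew, h04, neg_zero]
  have hr50 : ⁅x 5, x 0⁆ = 0 := by rw [← lie_skew, h05, neg_zero]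
  have hr21 : ⁅x 2, x 1⁆ = 0 := by rw [← lie_skew, h12, neg_zero]
  have hr41 : ⁅x 4, x 1⁆ = 0 := by rw [← lie_skew, h14, neg_zero]
  have hr51 : ⁅x 5, x 1⁆ = 0 := by rw [← lie_skew, h15, neg_zero]
  have hr32 : ⁅x 3, x 2⁆ = 0 := by rw [← lie_skew, h23, neg_zero]
  have hr42 : ⁅x 4, x 2⁆ = 0 := by rw [← lie_skew, h24, neg_zero]
  have hr52 : ⁅x 5, x 2⁆ = 0 := by rw [← lie_skew, h25, neg_zero]
  have hr43 : ⁅x 4, x 3⁆ = 0 := by rw [← lie_skew, h34, neg_zero]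
  have hr53 : ⁅x 5, x 3⁆ = 0 := by rw [← lie_skew, h35, neg_zero]
  have hr54 : ⁅x 5, x 4⁆ = 0 := by rw [← lie_skew, h45, neg_zero]
  constructor
  · have hJJ : J ∘ₗ J = -LinearMap.id := by
      refine Module.Basis.ext x fun i => ?_
      have hi : i = 0 ∨ i = 1 ∨ i = 2 ∨ i = 3 ∨ i = 4 ∨ i = 5 := by
        revert i; decide
      rcases hi with h | h | h | h | h | h <;> subst h <;>
        simp only [LinearMap.comp_apply, LinearMap.neg_apply, LinearMap.id_apply,
          hJ0, hJ1, hJ2, hJ3, hJ4, hJ5, map_add, map_smul, smul_add, smul_smul] <;>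
        match_scalars <;> field_simp <;> ring
    intro X
    have := congrFun (congrArg DFunLike.coe hJJ) X
    simpa using this
  · let N : L →ₗ[ℝ] L →ₗ[ℝ] L := LinearMap.mk₂ ℝ
      (fun X Y => ⁅J X, J Y⁆ - ⁅X, Y⁆ - J ⁅J X, Y⁆ - J ⁅X, J Y⁆)
      (fun X X' Y => by simp only [map_add, add_lie, lie_add]; abel)
      (fun c X Y => by
        simp only [map_smul, smul_lie, lie_smul, smul_sub])
      (fun X Y Y' => by simp only [map_add, add_lie, lie_add]; abel)
      (fun c X Y => by
        simp only [map_smul, smul_lie, lie_smul, smul_sub])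
    have hNapp : ∀ X Y : L, N X Y = ⁅J X, J Y⁆ - ⁅X, Y⁆ - J ⁅J X, Y⁆ - J ⁅X, J Y⁆ :=
      fun X Y => rfl
    have hN : N = 0 := by
      refine Module.Basis.ext x fun i => Module.Basis.ext x fun j => ?_
      have hi : i = 0 ∨ i = 1 ∨ i = 2 ∨ i = 3 ∨ i = 4 ∨ i = 5 := by
        revert i; decide
      have hj : j = 0 ∨ j = 1 ∨ j = 2 ∨ j = 3 ∨ j = 4 ∨ j = 5 := by
        revert j; decide
      rcases hi with h | h | h | h | h | h <;> subst h <;>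
        rcases hj with h | h | h | h | h | h <;> subst h <;>
        rw [hNapp, LinearMap.zero_apply, LinearMap.zero_apply] <;>
        simp only [
          hJ0, hJ1, hJ2, hJ3, hJ4, hJ5, lie_add, add_lie, lie_smul, smul_lie,
          h01, h02, h13, h03, h04, h05, h12, h14, h15, h23, h24, h25, h34, h35, h45,
          hr10, hr20, hr31, hr30, hr40, hr50, hr21, hr41, hr51, hr32, hr42, hr52,
          hr43, hr53, hr54, lie_self, neg_lie, lie_neg, map_add, map_smul, map_zero, map_neg,
          smul_zero, zero_smul, smul_neg, neg_smul, neg_zero, add_zero, zero_add,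
          sub_zero, zero_sub, sub_self, neg_neg, smul_add, smul_smul] <;>
        first
        | rfl
        | (match_scalars <;> field_simp <;> ring)
    intro X Y
    have := congrFun (congrArg DFunLike.coe (congrFun (congrArg DFunLike.coe hN) X)) Y
    rw [hNapp] at this
    simpa using this
end

section
/- Let M14₋₁ be the 6-dimensional real Lie algebra with basis x₁,…,x₆ and nonzero brackets [x₁,x₃]=x₄, [x₁,x₄]=x₆, [x₂,x₃]=x₅, [x₂,x₅]=−x₆. Then there exists no linear map J : M14₋₁ → M14₋₁ with J² = −1 satisfying the Nijenhuis integrability condition [JX,JY] − [X,Y] − J[JX,Y] − J[X,JY] = 0 for all X,Y. -/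
set_option maxHeartbeats 2000000

/-- The Lie algebra `M14₋₁` (`[x₁,x₃]=x₄, [x₁,x₄]=x₆, [x₂,x₃]=x₅, [x₂,x₅]=-x₆`)
admits no integrable almost complex structure. -/
theorem M14neg1_has_no_complex_structure
    (L : Type*) [LieRing L] [LieAlgebra ℝ L]
    (x : Module.Basis (Fin 6) ℝ L)
    (h02 : ⁅x 0, x 2⁆ = x 3) (h03 : ⁅x 0, x 3⁆ = x 5)
    (h12 : ⁅x 1, x 2⁆ = x 4) (h14 : ⁅x 1, x 4⁆ = -x 5)
    (h01 : ⁅x 0, x 1⁆ = 0) (h04 : ⁅x 0, x 4⁆ = 0) (h05 : ⁅x 0, x 5⁆ = 0)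
    (h13 : ⁅x 1, x 3⁆ = 0) (h15 : ⁅x 1, x 5⁆ = 0)
    (h23 : ⁅x 2, x 3⁆ = 0) (h24 : ⁅x 2, x 4⁆ = 0) (h25 : ⁅x 2, x 5⁆ = 0)
    (h34 : ⁅x 3, x 4⁆ = 0) (h35 : ⁅x 3, x 5⁆ = 0) (h45 : ⁅x 4, x 5⁆ = 0) :
    ¬ ∃ J : L →ₗ[ℝ] L, (∀ X : L, J (J X) = -X) ∧
      (∀ X Y : L, ⁅J X, J Y⁆ - ⁅X, Y⁆ - J ⁅J X, Y⁆ - J ⁅X, J Y⁆ = 0) := by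
  rintro ⟨J, hJ2, hN⟩
  have h10 : ⁅x 1, x 0⁆ = 0 := by rw [← lie_skew, h01, neg_zero]
  have h20 : ⁅x 2, x 0⁆ = -x 3 := by rw [← lie_skew, h02]
  have h30 : ⁅x 3, x 0⁆ = -x 5 := by rw [← lie_skew, h03]
  have h40 : ⁅x 4, x 0⁆ = 0 := by rw [← lie_skew, h04, neg_zero]
  have h50 : ⁅x 5, x 0⁆ = 0 := by rw [← lie_skew, h05, neg_zero]
  have h21 : ⁅x 2, x 1⁆ = -x 4 := by rw [← lie_skew, h12]
  have h31 : ⁅x 3, x 1⁆ = 0 := by rw [← lie_skew, h13, neg_zero]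
  have h41 : ⁅x 4, x 1⁆ = x 5 := by rw [← lie_skew, h14, neg_neg]
  have h51 : ⁅x 5, x 1⁆ = 0 := by rw [← lie_skew, h15, neg_zero]
  have h32 : ⁅x 3, x 2⁆ = 0 := by rw [← lie_skew, h23, neg_zero]
  have h42 : ⁅x 4, x 2⁆ = 0 := by rw [← lie_skew, h24, neg_zero]
  have h52 : ⁅x 5, x 2⁆ = 0 := by rw [← lie_skew, h25, neg_zero]
  have h43 : ⁅x 4, x 3⁆ = 0 := by rw [← lie_skew, h34, neg_zero]
  have h53 : ⁅x 5, x 3⁆ = 0 := by rw [← lie_skew, h35, neg_zero]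
  have h54 : ⁅x 5, x 4⁆ = 0 := by rw [← lie_skew, h45, neg_zero]
  have hb : ∀ u v : L,
      ⁅u, v⁆ = (x.repr u 0 * x.repr v 2 - x.repr u 2 * x.repr v 0) • x 3
        + (x.repr u 1 * x.repr v 2 - x.repr u 2 * x.repr v 1) • x 4
        + (x.repr u 0 * x.repr v 3 - x.repr u 3 * x.repr v 0
            - x.repr u 1 * x.repr v 4 + x.repr u 4 * x.repr v 1) • x 5 := by
    intro u v
    conv_lhs => rw [← x.sum_repr u, ← x.sum_repr v]
    simp only [Fin.sum_univ_six, add_lie, lie_add, smul_lie, lie_smul, h01, h02, h03, h04,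
      h05, h12, h13, h14, h15, h23, h24, h25, h34, h35, h45,
      h10, h20, h30, h40, h50, h21, h31, h41, h51, h32, h42, h52, h43, h53, h54, lie_self]
    module
  -- Nijenhuis equations in coordinates
  have n53 := hN (x 5) (x 3)
  have n54 := hN (x 5) (x 4)
  have n52 := hN (x 5) (x 2)
  have n50 := hN (x 5) (x 0)
  have n51 := hN (x 5) (x 1)
  have n30 := hN (x 3) (x 0)
  have n31 := hN (x 3) (x 1)
  simp only [hb] at n53 n54 n52 n50 n51 n30 n31
  simp only [map_add, map_smul, map_sub] at n53 n54 n52 n50 n51 n30 n31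
  have s530 := congrArg (fun w => x.repr w (0 : Fin 6)) n53
  have n53c3 := congrArg (fun w => x.repr w (3 : Fin 6)) n53
  have s541 := congrArg (fun w => x.repr w (1 : Fin 6)) n54
  have n54c3 := congrArg (fun w => x.repr w (3 : Fin 6)) n54
  have n52c3 := congrArg (fun w => x.repr w (3 : Fin 6)) n52
  have n50c2 := congrArg (fun w => x.repr w (2 : Fin 6)) n50
  have n50c3 := congrArg (fun w => x.repr w (3 : Fin 6)) n50
  have n50c4 := congrArg (fun w => x.repr w (4 : Fin 6)) n50
  have n51c2 := congrArg (fun w => x.repr w (2 : Fin 6)) n51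
  have n51c4 := congrArg (fun w => x.repr w (4 : Fin 6)) n51
  have n30c2 := congrArg (fun w => x.repr w (2 : Fin 6)) n30
  have n31c2 := congrArg (fun w => x.repr w (2 : Fin 6)) n31
  simp [Module.Basis.repr_self, Finsupp.single_apply] at s530 n53c3 s541 n54c3 n52c3 n50c2 n50c3 n50c4 n51c2 n51c4 n30c2 n31c2
  -- J² equations
  have j0 := hJ2 (x 0)
  have j5 := hJ2 (x 5)
  have e0 : J (x 0) = ∑ i, x.repr (J (x 0)) i • x i := (x.sum_repr _).symm
  have e5 : J (x 5) = ∑ i, x.repr (J (x 5)) i • x i := (x.sum_repr _).symm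
  rw [e0] at j0
  rw [e5] at j5
  simp only [map_sum, map_smul, Fin.sum_univ_six] at j0 j5
  have j0c0 := congrArg (fun w => x.repr w (0 : Fin 6)) j0
  have j5c5 := congrArg (fun w => x.repr w (5 : Fin 6)) j5
  simp [Module.Basis.repr_self, Finsupp.single_apply] at j0c0 j5c5
  set a0 := x.repr (J (x 5)) 0 with ha0d
  set a1 := x.repr (J (x 5)) 1 with ha1d
  set a2 := x.repr (J (x 5)) 2 with ha2d
  set a3 := x.repr (J (x 5)) 3 with ha3d
  set a4 := x.repr (J (x 5)) 4 with ha4d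
  set a5 := x.repr (J (x 5)) 5 with ha5d
  set B0 := x.repr (J (x 3)) 0 with hB0d
  set B2 := x.repr (J (x 3)) 2 with hB2d
  set B3 := x.repr (J (x 3)) 3 with hB3d
  set B4 := x.repr (J (x 3)) 4 with hB4d
  set B5 := x.repr (J (x 3)) 5 with hB5d
  set D0 := x.repr (J (x 4)) 0 with hD0d
  set D2 := x.repr (J (x 4)) 2 with hD2d
  set D3 := x.repr (J (x 4)) 3 with hD3d
  set D4 := x.repr (J (x 4)) 4 with hD4d
  set D5 := x.repr (J (x 4)) 5 with hD5d
  set C0 := x.repr (J (x 2)) 0 with hC0d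
  set C2 := x.repr (J (x 2)) 2 with hC2d
  set C5 := x.repr (J (x 2)) 5 with hC5d
  set P0 := x.repr (J (x 0)) 0 with hP0d
  set P1 := x.repr (J (x 0)) 1 with hP1d
  set P2 := x.repr (J (x 0)) 2 with hP2d
  set P3 := x.repr (J (x 0)) 3 with hP3d
  set P4 := x.repr (J (x 0)) 4 with hP4d
  set P5 := x.repr (J (x 0)) 5 with hP5d
  set Q0 := x.repr (J (x 1)) 0 with hQ0d
  set Q1 := x.repr (J (x 1)) 1 with hQ1d
  set Q2 := x.repr (J (x 1)) 2 with hQ2d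
  set Q5 := x.repr (J (x 1)) 5 with hQ5d
  -- a0 = 0 and a1 = 0 are s530 and s541
  by_cases hc : a2 = 0
  · -- then a3 = a4 = 0 and J x5 = a5 • x5, so a5^2 = -1
    have ha3 : a3 = 0 := by
      have h : a3 * a3 = 0 := by
        linear_combination n50c3 - P2 * s530 + (P0 - B3) * hc
      exact mul_self_eq_zero.mp h
    have ha4 : a4 = 0 := by
      have h : a4 * a4 = 0 := by
        linear_combination -n51c4 + Q2 * s541 + (D4 - Q1) * hc
      exact mul_self_eq_zero.mp h
    have h5 : a5 * a5 = -1 := by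
      linear_combination j5c5 - P5 * s530 - Q5 * s541 - C5 * hc - B5 * ha3 - D5 * ha4
    have hnn : (0:ℝ) ≤ a5 * a5 := mul_self_nonneg a5
    rw [h5] at hnn
    norm_num at hnn
  · have hcan : ∀ b : ℝ, a2 * b = 0 → b = 0 := fun b h =>
      (mul_eq_zero.mp h).resolve_left hc
    have hB0 : B0 = 0 := hcan _ (by linear_combination -n53c3 + (B2 - a3) * s530)
    have hD0 : D0 = 0 := hcan _ (by linear_combination -n54c3 + D2 * s530 + a3 * s541)
    have hC0 : C0 = 0 := hcan _ (by linear_combination -n52c3 + (C2 - B3) * s530 - D3 * s541)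
    have hB2 : B2 = -a3 := by
      have h : B2 + a3 = 0 := hcan _ (by linear_combination n50c2)
      linarith
    have hD2 : D2 = a4 := by
      have h : D2 - a4 = 0 := hcan _ (by linear_combination n51c2)
      linarith
    rw [hB2] at n30c2
    have hP0 : P0 = 0 := by
      have h : 2 * P0 = 0 := hcan _ (by linear_combination n30c2 - n50c3 + P2 * s530)
      linarith
    rw [hB2, hD2] at n31c2
    have hQ0 : Q0 = P1 := by
      have h : Q0 - P1 = 0 := hcan _ (by linear_combination n31c2 + n50c4 - P2 * s541)
      linarith
    have hP : P1 * P1 = -1 := by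
      linear_combination j0c0 - P0 * hP0 - P1 * hQ0 - P2 * hC0 - P3 * hB0 - P4 * hD0 - P5 * s530
    have hnn : (0:ℝ) ≤ P1 * P1 := mul_self_nonneg P1
    rw [hP] at hnn
    norm_num at hnn
end

section
/- Let G₆,₆ be the 6-dimensional real Lie algebra with basis x₁,…,x₆ and nonzero brackets [x₁,x₂]=x₄, [x₂,x₃]=x₆, [x₂,x₄]=x₅. Define J by J x₁ = x₂, J x₂ = −x₁, J x₃ = x₄, J x₄ = −x₃, J x₅ = −x₆, J x₆ = x₅. Then J² = −1 and J satisfies the Nijenhuis integrability condition [JX,JY] − [X,Y] − J[JX,Y] − J[X,JY] = 0 for all X,Y. -/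
/-- On the Lie algebra `𝒢₆,₆` (`[x₁,x₂]=x₄, [x₂,x₃]=x₆, [x₂,x₄]=x₅`), the map `J`
with `Jx₁=x₂, Jx₃=x₄, Jx₅=-x₆` is an integrable almost complex structure. -/
theorem g66_J_integrable
    (L : Type*) [LieRing L] [LieAlgebra ℝ L]
    (x : Module.Basis (Fin 6) ℝ L)
    (h01 : ⁅x 0, x 1⁆ = x 3) (h12 : ⁅x 1, x 2⁆ = x 5) (h13 : ⁅x 1, x 3⁆ = x 4)
    (h02 : ⁅x 0, x 2⁆ = 0) (h03 : ⁅x 0, x 3⁆ = 0) (h04 : ⁅x 0, x 4⁆ = 0)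
    (h05 : ⁅x 0, x 5⁆ = 0) (h14 : ⁅x 1, x 4⁆ = 0) (h15 : ⁅x 1, x 5⁆ = 0)
    (h23 : ⁅x 2, x 3⁆ = 0) (h24 : ⁅x 2, x 4⁆ = 0) (h25 : ⁅x 2, x 5⁆ = 0)
    (h34 : ⁅x 3, x 4⁆ = 0) (h35 : ⁅x 3, x 5⁆ = 0) (h45 : ⁅x 4, x 5⁆ = 0)
    (J : L →ₗ[ℝ] L)
    (hJ0 : J (x 0) = x 1) (hJ1 : J (x 1) = -x 0)
    (hJ2 : J (x 2) = x 3) (hJ3 : J (x 3) = -x 2)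
    (hJ4 : J (x 4) = -x 5) (hJ5 : J (x 5) = x 4) :
    (∀ X : L, J (J X) = -X) ∧
    (∀ X Y : L, ⁅J X, J Y⁆ - ⁅X, Y⁆ - J ⁅J X, Y⁆ - J ⁅X, J Y⁆ = 0) := by
  have h10 : ⁅x 1, x 0⁆ = -x 3 := by rw [← lie_skew, h01]
  have h21 : ⁅x 2, x 1⁆ = -x 5 := by rw [← lie_skew, h12]
  have h31 : ⁅x 3, x 1⁆ = -x 4 := by rw [← lie_skew, h13]
  have h20 : ⁅x 2, x 0⁆ = 0 := by rw [← lie_skew, h02, neg_zero]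
  have h30 : ⁅x 3, x 0⁆ = 0 := by rw [← lie_skew, h03, neg_zero]
  have h40 : ⁅x 4, x 0⁆ = 0 := by rw [← lie_skew, h04, neg_zero]
  have h50 : ⁅x 5, x 0⁆ = 0 := by rw [← lie_skew, h05, neg_zero]
  have h41 : ⁅x 4, x 1⁆ = 0 := by rw [← lie_skew, h14, neg_zero]
  have h51 : ⁅x 5, x 1⁆ = 0 := by rw [← lie_skew, h15, neg_zero]
  have h32 : ⁅x 3, x 2⁆ = 0 := by rw [← lie_skew, h23, neg_zero]
  have h42 : ⁅x 4, x 2⁆ = 0 := by rw [← lie_skew, h24, neg_zero]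
  have h52 : ⁅x 5, x 2⁆ = 0 := by rw [← lie_skew, h25, neg_zero]
  have h43 : ⁅x 4, x 3⁆ = 0 := by rw [← lie_skew, h34, neg_zero]
  have h53 : ⁅x 5, x 3⁆ = 0 := by rw [← lie_skew, h35, neg_zero]
  have h54 : ⁅x 5, x 4⁆ = 0 := by rw [← lie_skew, h45, neg_zero]
  constructor
  · have : J ∘ₗ J = -LinearMap.id := by
      apply x.ext
      intro i
      fin_cases i <;>
        simp [hJ0, hJ1, hJ2, hJ3, hJ4, hJ5]
    intro X
    have := LinearMap.congr_fun this X
    simpa using this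
  · set N : L →ₗ[ℝ] L →ₗ[ℝ] L :=
      LinearMap.mk₂ ℝ (fun X Y => ⁅J X, J Y⁆ - ⁅X, Y⁆ - J ⁅J X, Y⁆ - J ⁅X, J Y⁆)
        (by intro X X' Y; simp [add_lie, lie_add, map_add]; abel)
        (by intro c X Y; simp [smul_lie, lie_smul, map_smul, smul_sub])
        (by intro X Y Y'; simp [add_lie, lie_add, map_add]; abel)
        (by intro c X Y; simp [smul_lie, lie_smul, map_smul, smul_sub]) with hN
    have hN0 : N = 0 := by
      apply x.ext
      intro i
      apply x.ext
      intro j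
      fin_cases i <;> fin_cases j <;>
        simp [hN, hJ0, hJ1, hJ2, hJ3, hJ4, hJ5, h01, h12, h13, h02, h03, h04, h05,
          h14, h15, h23, h24, h25, h34, h35, h45, h10, h21, h31, h20, h30, h40, h50,
          h41, h51, h32, h42, h52, h43, h53, h54]
    intro X Y
    have := LinearMap.congr_fun (LinearMap.congr_fun hN0 X) Y
    simpa [hN] using this
end

section
/- Let M14₁ be the 6-dimensional real Lie algebra with basis x₁,…,x₆ and nonzero brackets [x₁,x₃]=x₄, [x₁,x₄]=x₆, [x₂,x₃]=x₅, [x₂,x₅]=x₆. For ε ∈ {1,−1}, define J_ε by J x₁ = x₂, J x₂ = −x₁, J x₃ = −(1/ε) x₆, J x₆ = ε x₃, J x₄ = x₅, J x₅ = −x₄. Then J_ε² = −1 and J_ε satisfies the Nijenhuis integrability condition for all X,Y ∈ M14₁. -/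
lemma bilin_zero_of_basis {L : Type*} [AddCommGroup L] [Module ℝ L]
    (b : Module.Basis (Fin 6) ℝ L) (f : L →ₗ[ℝ] L →ₗ[ℝ] L)
    (h : ∀ i j, f (b i) (b j) = 0) : ∀ X Y : L, f X Y = 0 := by
  have hf : f = 0 := b.ext fun i => b.ext fun j => by simpa using h i j
  intro X Y; rw [hf]; rfl


/-- On the Lie algebra `M14₁` (`[x₁,x₃]=x₄, [x₁,x₄]=x₆, [x₂,x₃]=x₅, [x₂,x₅]=x₆`),
for `ε = ±1` the map `J_ε` is an integrable almost complex structure. -/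
theorem M14pos1_Jeps_integrable
    (L : Type*) [LieRing L] [LieAlgebra ℝ L]
    (x : Module.Basis (Fin 6) ℝ L)
    (h02 : ⁅x 0, x 2⁆ = x 3) (h03 : ⁅x 0, x 3⁆ = x 5)
    (h12 : ⁅x 1, x 2⁆ = x 4) (h14 : ⁅x 1, x 4⁆ = x 5)
    (h01 : ⁅x 0, x 1⁆ = 0) (h04 : ⁅x 0, x 4⁆ = 0) (h05 : ⁅x 0, x 5⁆ = 0)
    (h13 : ⁅x 1, x 3⁆ = 0) (h15 : ⁅x 1, x 5⁆ = 0)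
    (h23 : ⁅x 2, x 3⁆ = 0) (h24 : ⁅x 2, x 4⁆ = 0) (h25 : ⁅x 2, x 5⁆ = 0)
    (h34 : ⁅x 3, x 4⁆ = 0) (h35 : ⁅x 3, x 5⁆ = 0) (h45 : ⁅x 4, x 5⁆ = 0)
    (ε : ℝ) (hε : ε = 1 ∨ ε = -1)
    (J : L →ₗ[ℝ] L)
    (hJ0 : J (x 0) = x 1) (hJ1 : J (x 1) = -x 0)
    (hJ2 : J (x 2) = -(1 / ε) • x 5) (hJ5 : J (x 5) = ε • x 2)
    (hJ3 : J (x 3) = x 4) (hJ4 : J (x 4) = -x 3) :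
    (∀ X : L, J (J X) = -X) ∧
    (∀ X Y : L, ⁅J X, J Y⁆ - ⁅X, Y⁆ - J ⁅J X, Y⁆ - J ⁅X, J Y⁆ = 0) := by

  have h20 : ⁅x 2, x 0⁆ = -x 3 := by rw [← lie_skew, h02]
  have h30 : ⁅x 3, x 0⁆ = -x 5 := by rw [← lie_skew, h03]
  have h21 : ⁅x 2, x 1⁆ = -x 4 := by rw [← lie_skew, h12]
  have h41 : ⁅x 4, x 1⁆ = -x 5 := by rw [← lie_skew, h14]
  have h10 : ⁅x 1, x 0⁆ = (0 : L) := by rw [← lie_skew, h01, neg_zero]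
  have h40 : ⁅x 4, x 0⁆ = (0 : L) := by rw [← lie_skew, h04, neg_zero]
  have h50 : ⁅x 5, x 0⁆ = (0 : L) := by rw [← lie_skew, h05, neg_zero]
  have h31 : ⁅x 3, x 1⁆ = (0 : L) := by rw [← lie_skew, h13, neg_zero]
  have h51 : ⁅x 5, x 1⁆ = (0 : L) := by rw [← lie_skew, h15, neg_zero]
  have h32 : ⁅x 3, x 2⁆ = (0 : L) := by rw [← lie_skew, h23, neg_zero]
  have h42 : ⁅x 4, x 2⁆ = (0 : L) := by rw [← lie_skew, h24, neg_zero]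
  have h52 : ⁅x 5, x 2⁆ = (0 : L) := by rw [← lie_skew, h25, neg_zero]
  have h43 : ⁅x 4, x 3⁆ = (0 : L) := by rw [← lie_skew, h34, neg_zero]
  have h53 : ⁅x 5, x 3⁆ = (0 : L) := by rw [← lie_skew, h35, neg_zero]
  have h54 : ⁅x 5, x 4⁆ = (0 : L) := by rw [← lie_skew, h45, neg_zero]
  have hε' : (1 : ℝ) / ε = ε := by rcases hε with rfl | rfl <;> norm_num
  have hεε : ε * ε = 1 := by rcases hε with rfl | rfl <;> norm_num
  rw [hε'] at hJ2
  constructor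
  · have hsq : J ∘ₗ J = -LinearMap.id := by
      apply x.ext
      intro i
      fin_cases i <;>
        simp [hJ0, hJ1, hJ2, hJ3, hJ4, hJ5, map_smul, smul_smul, hεε]
    intro X
    have := LinearMap.congr_fun hsq X
    simpa using this
  · have key := bilin_zero_of_basis x (LinearMap.mk₂ ℝ
      (fun X Y => ⁅J X, J Y⁆ - ⁅X, Y⁆ - J ⁅J X, Y⁆ - J ⁅X, J Y⁆)
      (fun X X' Y => by simp only [map_add, add_lie, lie_add]; abel)
      (fun c X Y => by
        simp only [map_smul, smul_lie, lie_smul, smul_sub])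
      (fun X Y Y' => by simp only [map_add, add_lie, lie_add]; abel)
      (fun c X Y => by
        simp only [map_smul, smul_lie, lie_smul, smul_sub]))
      (by
        intro i j
        simp only [LinearMap.mk₂_apply]
        fin_cases i <;> fin_cases j <;>
          simp [hJ0, hJ1, hJ2, hJ3, hJ4, hJ5, map_smul, smul_smul, hεε,
            h02, h03, h12, h14, h01, h04, h05, h13, h15, h23, h24, h25, h34, h35, h45,
            h20, h30, h21, h41, h10, h40, h50, h31, h51, h32, h42, h52, h43, h53, h54,
            lie_self, smul_lie, lie_smul, smul_sub, sub_eq_zero])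
    intro X Y
    simpa using key X Y
end

section
/- Let M5 be the realification of the complex Heisenberg algebra, with basis x₁,…,x₆ and nonzero brackets [x₁,x₃]=x₅, [x₁,x₄]=x₆, [x₂,x₃]=−x₆, [x₂,x₄]=x₅. For real α and β ≠ 0, define J(α,β) by J x₁ = −x₄, J x₄ = x₁, J x₂ = −x₃, J x₃ = x₂, J x₅ = α x₅ + β x₆, J x₆ = −((α²+1)/β) x₅ − α x₆. Then J(α,β)² = −1, J(α,β) satisfies the Nijenhuis integrability condition, and the associated subalgebra m = {X − iJX} of the complexification of M5 is abelian. -/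
open TensorProduct

set_option maxHeartbeats 2000000 in
/-- On `M5` (the realification of the complex Heisenberg algebra), for real `α` and
`β ≠ 0`, the map `J(α,β)` is an integrable almost complex structure whose
associated subalgebra `m = {X - i·JX}` of the complexification is abelian. -/
theorem M5_Jalphabeta_integrable_abelian
    (L : Type*) [LieRing L] [LieAlgebra ℝ L]
    (x : Module.Basis (Fin 6) ℝ L)
    (h02 : ⁅x 0, x 2⁆ = x 4) (h03 : ⁅x 0, x 3⁆ = x 5)
    (h12 : ⁅x 1, x 2⁆ = -x 5) (h13 : ⁅x 1, x 3⁆ = x 4)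
    (h01 : ⁅x 0, x 1⁆ = 0) (h04 : ⁅x 0, x 4⁆ = 0) (h05 : ⁅x 0, x 5⁆ = 0)
    (h14 : ⁅x 1, x 4⁆ = 0) (h15 : ⁅x 1, x 5⁆ = 0)
    (h23 : ⁅x 2, x 3⁆ = 0) (h24 : ⁅x 2, x 4⁆ = 0) (h25 : ⁅x 2, x 5⁆ = 0)
    (h34 : ⁅x 3, x 4⁆ = 0) (h35 : ⁅x 3, x 5⁆ = 0) (h45 : ⁅x 4, x 5⁆ = 0)
    (α β : ℝ) (hβ : β ≠ 0)
    (J : L →ₗ[ℝ] L)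
    (hJ0 : J (x 0) = -x 3) (hJ3 : J (x 3) = x 0)
    (hJ1 : J (x 1) = -x 2) (hJ2 : J (x 2) = x 1)
    (hJ4 : J (x 4) = α • x 4 + β • x 5)
    (hJ5 : J (x 5) = (-((α ^ 2 + 1) / β)) • x 4 + (-α) • x 5) :
    (∀ X : L, J (J X) = -X) ∧
    (∀ X Y : L, ⁅J X, J Y⁆ - ⁅X, Y⁆ - J ⁅J X, Y⁆ - J ⁅X, J Y⁆ = 0) ∧
    (∀ X Y : L,
      ⁅(1 : ℂ) ⊗ₜ[ℝ] X - Complex.I ⊗ₜ[ℝ] (J X),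
       (1 : ℂ) ⊗ₜ[ℝ] Y - Complex.I ⊗ₜ[ℝ] (J Y)⁆ = (0 : ℂ ⊗[ℝ] L)) := by
  -- reversed brackets
  have h20 : ⁅x 2, x 0⁆ = -x 4 := by rw [← lie_skew, h02]
  have h30 : ⁅x 3, x 0⁆ = -x 5 := by rw [← lie_skew, h03]
  have h21 : ⁅x 2, x 1⁆ = x 5 := by rw [← lie_skew, h12]; simp
  have h31 : ⁅x 3, x 1⁆ = -x 4 := by rw [← lie_skew, h13]
  have h10 : ⁅x 1, x 0⁆ = 0 := by rw [← lie_skew, h01]; simp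
  have h40 : ⁅x 4, x 0⁆ = 0 := by rw [← lie_skew, h04]; simp
  have h50 : ⁅x 5, x 0⁆ = 0 := by rw [← lie_skew, h05]; simp
  have h41 : ⁅x 4, x 1⁆ = 0 := by rw [← lie_skew, h14]; simp
  have h51 : ⁅x 5, x 1⁆ = 0 := by rw [← lie_skew, h15]; simp
  have h32 : ⁅x 3, x 2⁆ = 0 := by rw [← lie_skew, h23]; simp
  have h42 : ⁅x 4, x 2⁆ = 0 := by rw [← lie_skew, h24]; simp
  have h52 : ⁅x 5, x 2⁆ = 0 := by rw [← lie_skew, h25]; simp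
  have h43 : ⁅x 4, x 3⁆ = 0 := by rw [← lie_skew, h34]; simp
  have h53 : ⁅x 5, x 3⁆ = 0 := by rw [← lie_skew, h35]; simp
  have h54 : ⁅x 5, x 4⁆ = 0 := by rw [← lie_skew, h45]; simp
  have hdiv : β * ((α ^ 2 + 1) / β) = α ^ 2 + 1 := mul_div_cancel₀ _ hβ
  -- key identities on basis, extended bilinearly
  have hP : ∀ X Y : L, ⁅J X, J Y⁆ = ⁅X, Y⁆ := by
    have : (LinearMap.mk₂ ℝ (fun X Y : L => ⁅J X, J Y⁆ - ⁅X, Y⁆)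
        (by intros; simp [add_lie]; abel)
        (by intros; simp [smul_lie, smul_sub])
        (by intros; simp [lie_add]; abel)
        (by intros; simp [lie_smul, smul_sub])) = 0 := by
      apply x.ext; intro i
      apply x.ext; intro j
      fin_cases i <;> fin_cases j <;>
        simp [hJ0, hJ1, hJ2, hJ3, hJ4, hJ5, h02, h03, h12, h13, h01, h04, h05,
          h14, h15, h23, h24, h25, h34, h35, h45, h20, h30, h21, h31, h10, h40,
          h50, h41, h51, h32, h42, h52, h43, h53, h54, lie_smul, smul_lie]
    intro X Y
    have := LinearMap.congr_fun (LinearMap.congr_fun this X) Y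
    simpa [sub_eq_zero] using this
  have hQ : ∀ X Y : L, ⁅J X, Y⁆ = -⁅X, J Y⁆ := by
    have : (LinearMap.mk₂ ℝ (fun X Y : L => ⁅J X, Y⁆ + ⁅X, J Y⁆)
        (by intros; simp [add_lie]; abel)
        (by intros; simp [smul_lie, lie_smul, smul_add])
        (by intros; simp [lie_add]; abel)
        (by intros; simp [lie_smul, smul_lie, smul_add])) = 0 := by
      apply x.ext; intro i
      apply x.ext; intro j
      fin_cases i <;> fin_cases j <;>
        simp [hJ0, hJ1, hJ2, hJ3, hJ4, hJ5, h02, h03, h12, h13, h01, h04, h05,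
          h14, h15, h23, h24, h25, h34, h35, h45, h20, h30, h21, h31, h10, h40,
          h50, h41, h51, h32, h42, h52, h43, h53, h54, lie_smul, smul_lie]
    intro X Y
    have := LinearMap.congr_fun (LinearMap.congr_fun this X) Y
    rw [eq_neg_iff_add_eq_zero]
    simpa using this
  have hJJ : ∀ X : L, J (J X) = -X := by
    have : J ∘ₗ J = -LinearMap.id := by
      apply x.ext; intro i
      fin_cases i <;>
        simp [hJ0, hJ1, hJ2, hJ3, hJ4, hJ5, smul_add, smul_smul, hdiv, mul_div_cancel₀, hβ,
          smul_sub, sub_smul, add_smul, neg_smul, mul_comm] <;>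
        module
    intro X
    simpa using LinearMap.congr_fun this X
  refine ⟨hJJ, ?_, ?_⟩
  · intro X Y
    rw [hP, hQ X Y, map_neg]
    abel
  · intro X Y
    simp only [sub_lie, lie_sub, LieAlgebra.ExtendScalars.bracket_tmul, hP, hQ X Y,
      one_mul, mul_one, Complex.I_mul_I, neg_tmul, tmul_neg, neg_neg]
    abel
end
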